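/- Let R be a commutative noetherian ring and d ≥ 0 an integer. Let M be a finitely generated R-module admitting a resolution 0 → P_d → ⋯ → P_1 → P_0 → M → 0 by finitely generated projective R-modules (some P_i possibly zero), and suppose Ext^i_R(M, R) = 0 for all i < d. Then N := Ext^d_R(M, R) is a finitely generated R-module admitting a resolution of length at most d by finitely generated projective R-modules, Ext^i_R(N, R) = 0 for all i ≠ d, and there is an isomorphism of R-modules M ≅ Ext^d_R(Ext^d_R(M, R), R). -/

import Mathlib

open CategoryTheory CategoryTheory.Limits

universe u

/-- `M` admits a resolution `0 → P_d → ⋯ → P_1 → P_0 → M → 0` by finitely generated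
projective `R`-modules (some `P_i` possibly zero). -/
def HasFinProjResLength (R : Type u) [CommRing R] (d : ℕ) (M : ModuleCat.{u} R) : Prop :=
  ∃ (P : ChainComplex (ModuleCat.{u} R) ℕ) (ε : P.X 0 ⟶ M),
    (∀ i : ℕ, Projective (P.X i)) ∧ (∀ i : ℕ, Module.Finite R (P.X i)) ∧
    (∀ i : ℕ, d < i → IsZero (P.X i)) ∧
    Epi ε ∧ (∃ h0 : P.d 1 0 ≫ ε = 0, (ShortComplex.mk (P.d 1 0) ε h0).Exact) ∧
    (∀ n : ℕ, P.ExactAt (n + 1))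

/-- The Ext modules `Ext^n_R(M, N)` for `R`-modules `M`, `N`. -/
noncomputable def extModule (R : Type u) [CommRing R] (n : ℕ)
    (M N : ModuleCat.{u} R) : ModuleCat.{u} R :=
  ((Ext R (ModuleCat.{u} R) n).obj (Opposite.op M)).obj N

namespace Stmt11Aux

open HomologicalComplex

variable {R : Type u} [CommRing R]

abbrev dualMod (A : ModuleCat.{u} R) : ModuleCat.{u} R :=
  ModuleCat.of R (A ⟶ ModuleCat.of R R)

lemma dual_projective (A : ModuleCat.{u} R) (h1 : Module.Finite R A)
    (h : Projective A) : Projective (dualMod A) := by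
  letI := h1
  haveI : Module.Projective R A := (IsProjective.iff_projective A).mpr h
  haveI : Module.Projective R (A ⟶ ModuleCat.of R R) :=
    Module.Projective.of_equiv (ModuleCat.homLinearEquiv (S := R)).symm
  exact (IsProjective.iff_projective (A ⟶ ModuleCat.of R R)).mp inferInstance

lemma dual_finite (A : ModuleCat.{u} R) (h1 : Module.Finite R A)
    (h : Projective A) : Module.Finite R (dualMod A) := by
  letI := h1
  haveI : Module.Projective R A := (IsProjective.iff_projective A).mpr h
  exact Module.Finite.equiv (ModuleCat.homLinearEquiv (S := R)).symm

lemma dual_isZero (A : ModuleCat.{u} R) (h : IsZero A) : IsZero (dualMod A) := by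
  haveI : Subsingleton (dualMod A) := ⟨fun f g => h.eq_of_src f g⟩
  exact ModuleCat.isZero_of_subsingleton _

/-- The double dual isomorphism for a finitely generated projective module. -/
noncomputable def ddIso (A : ModuleCat.{u} R) (h1 : Module.Finite R A)
    (h2 : Module.Projective R A) : A ≅ dualMod (dualMod A) :=
  letI := h1; letI := h2
  (((Module.evalEquiv R A).trans
    (ModuleCat.homLinearEquiv (M := A) (N := ModuleCat.of R R) (S := R)).dualMap).trans
    (ModuleCat.homLinearEquiv (M := dualMod A) (N := ModuleCat.of R R) (S := R)).symm).toModuleIso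

/-- index reversal function -/
def rf (d : ℕ) : ℕ → ℕ
  | 0 => d
  | i+1 => if i+1 ≤ d then d - (i+1) else i+1

lemma rf_zero (d : ℕ) : rf d 0 = d := rfl
lemma rf_of_le {d i : ℕ} (h : i ≤ d) : rf d i = d - i := by cases i <;> simp [rf, h]
lemma rf_of_gt {d i : ℕ} (h : d < i) : rf d i = i := by
  cases i with
  | zero => omega
  | succ n => simp [rf]; omega

/-- the reversed (truncated) chain complex associated to a cochain complex -/
noncomputable def rev (d : ℕ) (CC : CochainComplex (ModuleCat.{u} R) ℕ) :
    ChainComplex (ModuleCat.{u} R) ℕ :=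
  ChainComplex.of (fun i => CC.X (rf d i)) (fun i => CC.d (rf d (i+1)) (rf d i))
    (fun _ => CC.d_comp_d _ _ _)

/-- the reversed (truncated) cochain complex associated to a chain complex -/
noncomputable def revP (d : ℕ) (P : ChainComplex (ModuleCat.{u} R) ℕ) :
    CochainComplex (ModuleCat.{u} R) ℕ :=
  CochainComplex.of (fun i => P.X (rf d i)) (fun i => P.d (rf d i) (rf d (i+1)))
    (fun _ => P.d_comp_d _ _ _)

/-- comparison between the double-dual complex and the original one -/
noncomputable def masterIso (d : ℕ) (P : ChainComplex (ModuleCat.{u} R) ℕ)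
    (hfin : ∀ i, Module.Finite R (P.X i)) (hprojM : ∀ i, Module.Projective R (P.X i)) :
    revP d P ≅ (rev d (P.linearYonedaObj R (ModuleCat.of R R))).linearYonedaObj R
      (ModuleCat.of R R) :=
  HomologicalComplex.Hom.isoOfComponents
    (fun i => ddIso (P.X (rf d i)) (hfin _) (hprojM _))
    (fun i j hij => by
      obtain rfl : i + 1 = j := hij
      ext x
      apply ModuleCat.hom_ext
      apply LinearMap.ext
      intro φ
      simp only [rev, revP, ChainComplex.of_d, CochainComplex.of_d]
      simp [ddIso, ChainComplex.linearYonedaObj_d, Module.evalEquiv, Module.Dual.eval, ChainComplex.of.d, CochainComplex.of.d]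
      rfl)

lemma d_congr {ι : Type} {c : ComplexShape ι}
    (K : HomologicalComplex (ModuleCat.{u} R) c)
    {a b a' b' : ι} (ha : a = a') (hb : b = b') :
    K.d a b = eqToHom (congrArg K.X ha) ≫ K.d a' b' ≫ eqToHom (congrArg K.X hb).symm := by
  subst ha; subst hb; simp

lemma eqToHom_d_comm {ι : Type} {c : ComplexShape ι}
    (K : HomologicalComplex (ModuleCat.{u} R) c)
    {a b a' b' : ι} (ha : a = a') (hb : b = b') :
    K.d a b ≫ eqToHom (congrArg K.X hb) = eqToHom (congrArg K.X ha) ≫ K.d a' b' := by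
  subst ha; subst hb; simp

lemma quasiIsoAt_zero_aux (Z : ModuleCat.{u} R) (K : ChainComplex (ModuleCat.{u} R) ℕ)
    (ε : K.X 0 ⟶ Z)
    (h0 : K.d 1 0 ≫ ε = 0) (hepi : Epi ε)
    (hex0 : (ShortComplex.mk (K.d 1 0) ε h0).Exact) :
    QuasiIsoAt ((ChainComplex.toSingle₀Equiv K Z).symm ⟨ε, h0⟩) 0 := by
  haveI : Epi (ShortComplex.mk (K.d 1 0) ε h0).g := hepi
  set L := (ChainComplex.single₀ (ModuleCat.{u} R)).obj Z with hL
  set π : K ⟶ L := (ChainComplex.toSingle₀Equiv K Z).symm ⟨ε, h0⟩ with hπ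
  rw [quasiIsoAt_iff_isIso_homologyMap]
  have h1 : IsIso (K.homologyι 0) := ChainComplex.isIso_homologyι₀ K
  have h2 : IsIso (L.homologyι 0) := ChainComplex.isIso_homologyι₀ L
  have h3 : IsIso (L.pOpcycles 0) :=
    L.isIso_pOpcycles 1 0 (by simp) ((HomologicalComplex.isZero_single_obj_X _ _ _ _ (by simp)).eq_of_src _ _)
  have hc : IsColimit (CokernelCofork.ofπ ε h0) := hex0.gIsCokernel
  have hc' := K.opcyclesIsCokernel 1 0 (by simp)
  have he := hc'.comp_coconePointUniqueUpToIso_hom hc WalkingParallelPair.one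
  simp only [Cofork.app_one_eq_π] at he
  have h4 : opcyclesMap π 0 = (hc'.coconePointUniqueUpToIso hc).hom ≫ L.pOpcycles 0 := by
    rw [← cancel_epi (K.pOpcycles 0), p_opcyclesMap]
    dsimp at he ⊢
    have he' := congrArg (fun f => f ≫ L.pOpcycles 0) he
    have hf := congrArg (fun f => f ≫ L.pOpcycles 0)
      (ChainComplex.toSingle₀Equiv_symm_apply_f_zero ε h0)
    exact hf.trans (he'.symm.trans (Category.assoc _ _ _))
  have h5 : IsIso (opcyclesMap π 0) := by rw [h4]; exact IsIso.comp_isIso' inferInstance h3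
  have h6 : homologyMap π 0 =
      K.homologyι 0 ≫ opcyclesMap π 0 ≫ inv (L.homologyι 0) := by
    rw [← cancel_mono (L.homologyι 0)]
    simp [homologyι_naturality π 0]
  rw [h6]; infer_instance

/-- Construct a `ProjectiveResolution` from an augmented exact complex. -/
noncomputable def resOfData (Z : ModuleCat.{u} R) (K : ChainComplex (ModuleCat.{u} R) ℕ)
    (hproj : ∀ i, Projective (K.X i)) (ε : K.X 0 ⟶ Z) (hepi : Epi ε)
    (h0 : K.d 1 0 ≫ ε = 0) (hex0 : (ShortComplex.mk (K.d 1 0) ε h0).Exact)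
    (hexs : ∀ n, K.ExactAt (n + 1)) : ProjectiveResolution Z where
  complex := K
  projective := hproj
  π := (ChainComplex.toSingle₀Equiv K Z).symm ⟨ε, h0⟩
  quasiIso := ⟨fun i => by
    cases i with
    | zero => exact quasiIsoAt_zero_aux Z K ε h0 hepi hex0
    | succ n =>
      rw [quasiIsoAt_iff_exactAt' _ (n + 1)
        (ChainComplex.exactAt_succ_single_obj _ _)]
      exact hexs n⟩

/-- differentials of the reversed complexes -/
lemma rev_d (d : ℕ) (CC : CochainComplex (ModuleCat.{u} R) ℕ) (i : ℕ) :
    (rev d CC).d (i+1) i = CC.d (rf d (i+1)) (rf d i) :=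
  ChainComplex.of_d (fun i => CC.X (rf d i)) (fun i => CC.d (rf d (i+1)) (rf d i)) i

lemma rev_d10 (d : ℕ) (CC : CochainComplex (ModuleCat.{u} R) ℕ) :
    (rev d CC).d 1 0 = CC.d (rf d 1) d :=
  ChainComplex.of_d (fun i => CC.X (rf d i)) (fun i => CC.d (rf d (i+1)) (rf d i)) 0

lemma revP_d (d : ℕ) (P : ChainComplex (ModuleCat.{u} R) ℕ) (i : ℕ) :
    (revP d P).d i (i+1) = P.d (rf d i) (rf d (i+1)) :=
  CochainComplex.of_d (fun i => P.X (rf d i)) (fun i => P.d (rf d i) (rf d (i+1))) i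

lemma revP_d01 (d : ℕ) (P : ChainComplex (ModuleCat.{u} R) ℕ) :
    (revP d P).d 0 1 = P.d d (rf d 1) :=
  CochainComplex.of_d (fun i => P.X (rf d i)) (fun i => P.d (rf d i) (rf d (i+1))) 0

/-- `d 1 0` of the reversed complex composed with the projection to opcycles vanishes. -/
lemma rev_d10_pOp (d : ℕ) (CC : CochainComplex (ModuleCat.{u} R) ℕ) :
    (rev d CC).d 1 0 ≫ CC.pOpcycles d = 0 := by
  rw [rev_d10]
  exact CC.d_pOpcycles (rf d 1) d

/-- exactness of `Q.X 1 ⟶ Q.X 0 ⟶ opcycles`. -/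
lemma rev_exact0 (d : ℕ) (CC : CochainComplex (ModuleCat.{u} R) ℕ) :
    (ShortComplex.mk ((rev d CC).d 1 0) (CC.pOpcycles d) (rev_d10_pOp d CC)).Exact := by
  rcases d with _ | e
  · have hf : (rev 0 CC).d 1 0 = 0 := by
      rw [rev_d10]
      exact CC.shape _ _ (by simp [rf])
    rw [ShortComplex.exact_iff_mono _ hf]
    haveI : IsIso (CC.pOpcycles 0) :=
      CC.isIso_pOpcycles 0 0 (by simp) (CC.shape _ _ (by simp))
    exact (inferInstance : Mono (CC.pOpcycles 0))
  · have h1 : rf (e+1) 1 = e := by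
      rw [rf_of_le (by omega)]; omega
    have hex := ShortComplex.exact_of_g_is_cokernel
        (ShortComplex.mk (CC.d (rf (e+1) 1) (e+1)) (CC.pOpcycles (e+1))
          (CC.d_pOpcycles (rf (e+1) 1) (e+1)))
        (CC.opcyclesIsCokernel (rf (e+1) 1) (e+1) (by simp [h1]))
    refine (ShortComplex.exact_iff_of_iso
      (ShortComplex.isoMk (Iso.refl _) (Iso.refl _) (Iso.refl _)
        ?_ (by exact (Category.id_comp _).trans (Category.comp_id _).symm))).2 hex
    · dsimp
      rw [rev_d10]
      exact (Category.id_comp _).trans (Category.comp_id _).symm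

/-- homology at the top degree of a bounded cochain complex is a cokernel. -/
noncomputable def homologyTopIso (K : CochainComplex (ModuleCat.{u} R) ℕ) (dd : ℕ)
    (h : IsZero (K.X (dd+1))) :
    K.homology dd ≅ cokernel (K.d ((ComplexShape.up ℕ).prev dd) dd) :=
  K.isoHomologyι dd (dd+1) (by simp) (h.eq_of_tgt _ _) ≪≫
    IsColimit.coconePointUniqueUpToIso (K.opcyclesIsCokernel _ dd rfl)
      (colimit.isColimit _)

end Stmt11Aux

open Stmt11Aux HomologicalComplex in
/-- Let `R` be a commutative noetherian ring and `d ≥ 0`.  Let `M` be a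
finitely generated `R`-module admitting a resolution `0 → P_d → ⋯ → P_0 → M → 0` by
finitely generated projective `R`-modules, with `Ext^i_R(M, R) = 0` for all `i < d`.
Then `N := Ext^d_R(M, R)` is a finitely generated `R`-module admitting a resolution of
length at most `d` by finitely generated projective `R`-modules, `Ext^i_R(N, R) = 0`
for all `i ≠ d`, and `M ≅ Ext^d_R(Ext^d_R(M, R), R)`. -/
theorem stmt_11 (R : Type u) [CommRing R] [IsNoetherianRing R] (d : ℕ)
    (M : ModuleCat.{u} R) (hMfin : Module.Finite R M)
    (hMres : HasFinProjResLength R d M)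
    (hMext : ∀ i : ℕ, i < d → IsZero (extModule R i M (ModuleCat.of R R))) :
    Module.Finite R (extModule R d M (ModuleCat.of R R)) ∧
    HasFinProjResLength R d (extModule R d M (ModuleCat.of R R)) ∧
    (∀ i : ℕ, i ≠ d → IsZero
      (extModule R i (extModule R d M (ModuleCat.of R R)) (ModuleCat.of R R))) ∧
    Nonempty (M ≅ extModule R d (extModule R d M (ModuleCat.of R R))
      (ModuleCat.of R R)) := by
  obtain ⟨P, ε, hproj, hfin, hzero, hepi, ⟨h0, hex0⟩, hexs⟩ := hMres
  have hprojM : ∀ i, Module.Projective R (P.X i) :=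
    fun i => (IsProjective.iff_projective (P.X i)).mpr (hproj i)
  let resM : ProjectiveResolution M := resOfData M P hproj ε hepi h0 hex0 hexs
  let C : CochainComplex (ModuleCat.{u} R) ℕ := P.linearYonedaObj R (ModuleCat.of R R)
  have extM : ∀ n : ℕ, Nonempty (extModule R n M (ModuleCat.of R R) ≅ C.homology n) :=
    fun n => ⟨resM.isoExt n (ModuleCat.of R R)⟩
  have hCzero : ∀ j, d < j → IsZero (C.X j) := fun j hj => dual_isZero _ (hzero j hj)
  have hCex : ∀ i, i < d → C.ExactAt i := fun i hi => by
    obtain ⟨e⟩ := extM i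
    rw [HomologicalComplex.exactAt_iff_isZero_homology]
    exact IsZero.of_iso (hMext i hi) e.symm
  -- the reversed dual complex
  have hQproj : ∀ i, Projective ((rev d C).X i) :=
    fun i => dual_projective (P.X (rf d i)) (hfin _) (hproj _)
  have hQfin : ∀ i, Module.Finite R ((rev d C).X i) :=
    fun i => dual_finite (P.X (rf d i)) (hfin _) (hproj _)
  have hQzero : ∀ i, d < i → IsZero ((rev d C).X i) := fun i hi => by
    show IsZero (C.X (rf d i))
    rw [rf_of_gt hi]
    exact hCzero i hi
  -- the augmentation of the reversed dual complex
  have hd1 : C.d d (d+1) = 0 := (hCzero (d+1) (by omega)).eq_of_tgt _ _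
  obtain ⟨eM⟩ := extM d
  let eN : extModule R d M (ModuleCat.of R R) ≅ C.opcycles d :=
    eM ≪≫ C.isoHomologyι d (d+1) (by simp) hd1
  let εN : (rev d C).X 0 ⟶ extModule R d M (ModuleCat.of R R) := C.pOpcycles d ≫ eN.inv
  haveI hεNepi : Epi εN := epi_comp' (inferInstance : Epi (C.pOpcycles d)) inferInstance
  have h0N : (rev d C).d 1 0 ≫ εN = 0 := by
    show ((rev d C).d 1 0 ≫ C.pOpcycles d) ≫ eN.inv = 0
    rw [rev_d10_pOp, zero_comp]
  have hexN0 : (ShortComplex.mk ((rev d C).d 1 0) εN h0N).Exact := by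
    refine (ShortComplex.exact_iff_of_iso
      (S₁ := ShortComplex.mk ((rev d C).d 1 0) (C.pOpcycles d) (rev_d10_pOp d C))
      (S₂ := ShortComplex.mk ((rev d C).d 1 0) εN h0N)
      (ShortComplex.isoMk (Iso.refl _) (Iso.refl _) eN.symm (by simp) ?_)).1
      (rev_exact0 d C)
    show 𝟙 ((rev d C).X 0) ≫ εN = C.pOpcycles d ≫ eN.symm.hom
    rw [Category.id_comp]
    rfl
  have hexN : ∀ n, (rev d C).ExactAt (n+1) := by
    intro n
    by_cases hgt : d < n + 1
    · rw [exactAt_iff]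
      exact ShortComplex.exact_of_isZero_X₂ _ (hQzero _ hgt)
    · push_neg at hgt
      by_cases heq : n + 1 = d
      · -- n + 1 = d
        rw [(rev d C).exactAt_iff' (n+1+1) (n+1) n (by simp) (by simp)]
        have hf : (rev d C).d (n+1+1) (n+1) = 0 :=
          (hQzero (n+1+1) (by omega)).eq_of_src _ _
        rw [ShortComplex.exact_iff_mono _ hf]
        show Mono ((rev d C).d (n+1) n)
        have hg : (rev d C).d (n+1) n = C.d (rf d (n+1)) (rf d n) := rev_d _ _ n
        have h3 : rf d (n+1) = 0 := by rw [rf_of_le (by omega)]; omega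
        have h4 : rf d n = 1 := by rw [rf_of_le (by omega)]; omega
        have hC0 : C.ExactAt 0 := hCex 0 (by omega)
        rw [C.exactAt_iff' 0 0 1 (by simp) (by simp)] at hC0
        haveI : Mono (C.d 0 1) := hC0.mono_g (C.shape 0 0 (by simp))
        rw [hg, d_congr C h3 h4]
        exact mono_comp' (inferInstance : Mono (eqToHom (congrArg C.X h3)))
          (mono_comp' this (inferInstance : Mono (eqToHom (congrArg C.X h4).symm)))
      · -- n + 1 < d
        rw [(rev d C).exactAt_iff' (n+1+1) (n+1) n (by simp) (by simp)]
        have hC : C.ExactAt (rf d (n+1)) := hCex _ (by rw [rf_of_le (by omega)]; omega)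
        have hprev : (ComplexShape.up ℕ).prev (rf d (n+1)) = rf d (n+1+1) := by
          have h5 : rf d (n+1) = (d - (n+1+1)) + 1 := by
            rw [rf_of_le (by omega)]; omega
          rw [h5, CochainComplex.prev_nat_succ, rf_of_le (by omega)]
        have hnext : (ComplexShape.up ℕ).next (rf d (n+1)) = rf d n := by
          rw [CochainComplex.next, rf_of_le (by omega), rf_of_le (by omega)]; omega
        rw [C.exactAt_iff' (rf d (n+1+1)) (rf d (n+1)) (rf d n) hprev hnext] at hC
        refine (ShortComplex.exact_iff_of_iso
          (S₁ := (rev d C).sc' (n+1+1) (n+1) n)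
          (S₂ := C.sc' (rf d (n+1+1)) (rf d (n+1)) (rf d n))
          (ShortComplex.isoMk (Iso.refl _) (Iso.refl _) (Iso.refl _) ?_ ?_)).2 hC
        · show 𝟙 _ ≫ C.d (rf d (n+1+1)) (rf d (n+1)) = (rev d C).d (n+1+1) (n+1) ≫ 𝟙 _
          rw [rev_d]; exact (Category.id_comp _).trans (Category.comp_id _).symm
        · show 𝟙 _ ≫ C.d (rf d (n+1)) (rf d n) = (rev d C).d (n+1) n ≫ 𝟙 _
          rw [rev_d]; exact (Category.id_comp _).trans (Category.comp_id _).symm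
  -- the projective resolution of N
  let resN : ProjectiveResolution (extModule R d M (ModuleCat.of R R)) :=
    resOfData _ (rev d C) hQproj εN hεNepi h0N hexN0 hexN
  -- comparison with the double dual complex
  have extN : ∀ i : ℕ, Nonempty
      (extModule R i (extModule R d M (ModuleCat.of R R)) (ModuleCat.of R R) ≅
        (revP d P).homology i) :=
    fun i => ⟨resN.isoExt i (ModuleCat.of R R) ≪≫
      ((homologyFunctor (ModuleCat.{u} R) (ComplexShape.up ℕ) i).mapIso
        (masterIso d P hfin hprojM)).symm⟩
  have hEzero : ∀ i, d < i → IsZero ((revP d P).X i) := fun i hi => by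
    show IsZero (P.X (rf d i))
    rw [rf_of_gt hi]
    exact hzero i hi
  have hEhom_zero : ∀ i, i ≠ d → IsZero ((revP d P).homology i) := by
    intro i hi
    rw [← exactAt_iff_isZero_homology]
    rcases Nat.lt_or_ge i d with hlt | hge
    · rcases i with _ | k
      · -- i = 0 < d
        rw [(revP d P).exactAt_iff' 0 0 1 (by simp) (by simp)]
        have hf : (revP d P).d 0 0 = 0 := (revP d P).shape _ _ (by simp)
        rw [ShortComplex.exact_iff_mono _ hf]
        show Mono ((revP d P).d 0 1)
        have h1 : (revP d P).d 0 1 = P.d (rf d 0) (rf d 1) := revP_d d P 0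
        obtain ⟨m, rfl⟩ : ∃ m, d = m + 1 := ⟨d - 1, by omega⟩
        have h2 : rf (m+1) 1 = m := by rw [rf_of_le (by omega)]; omega
        have hPd := hexs m
        rw [P.exactAt_iff' (m+1+1) (m+1) m (by simp) (by simp)] at hPd
        have hf' : P.d (m+1+1) (m+1) = 0 := (hzero _ (by omega)).eq_of_src _ _
        haveI : Mono (P.d (m+1) m) := hPd.mono_g hf'
        rw [h1, d_congr P (rf_zero (m+1)) h2]
        exact mono_comp' (inferInstance : Mono (eqToHom (congrArg P.X (rf_zero (m+1)))))
          (mono_comp' this (inferInstance : Mono (eqToHom (congrArg P.X h2).symm)))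
      · -- i = k+1 < d
        rw [(revP d P).exactAt_iff' k (k+1) (k+1+1) (by simp) (by simp)]
        have hP : P.ExactAt (rf d (k+1)) := by
          rw [show rf d (k+1) = (d - (k+1+1)) + 1 by rw [rf_of_le (by omega)]; omega]
          exact hexs _
        have hprev : (ComplexShape.down ℕ).prev (rf d (k+1)) = rf d k := by
          rw [ChainComplex.prev, rf_of_le (by omega), rf_of_le (by omega)]; omega
        have hnext : (ComplexShape.down ℕ).next (rf d (k+1)) = rf d (k+1+1) := by
          rw [show rf d (k+1) = (d - (k+1+1)) + 1 by rw [rf_of_le (by omega)]; omega,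
            ChainComplex.next_nat_succ, rf_of_le (by omega)]
        rw [P.exactAt_iff' (rf d k) (rf d (k+1)) (rf d (k+1+1)) hprev hnext] at hP
        refine (ShortComplex.exact_iff_of_iso
          (S₁ := (revP d P).sc' k (k+1) (k+1+1))
          (S₂ := P.sc' (rf d k) (rf d (k+1)) (rf d (k+1+1)))
          (ShortComplex.isoMk (Iso.refl _) (Iso.refl _) (Iso.refl _) ?_ ?_)).2 hP
        · show 𝟙 _ ≫ P.d (rf d k) (rf d (k+1)) = (revP d P).d k (k+1) ≫ 𝟙 _
          rw [revP_d]; exact (Category.id_comp _).trans (Category.comp_id _).symm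
        · show 𝟙 _ ≫ P.d (rf d (k+1)) (rf d (k+1+1)) = (revP d P).d (k+1) (k+1+1) ≫ 𝟙 _
          rw [revP_d]; exact (Category.id_comp _).trans (Category.comp_id _).symm
    · -- i > d
      rw [exactAt_iff]
      exact ShortComplex.exact_of_isZero_X₂ _ (hEzero i (by omega))
  -- the top homology of the double dual complex is M
  have hMcoker : IsColimit (CokernelCofork.ofπ ε h0) := by
    haveI : Epi (ShortComplex.mk (P.d 1 0) ε h0).g := hepi
    exact hex0.gIsCokernel
  have cokIso : Nonempty
      (cokernel ((revP d P).d ((ComplexShape.up ℕ).prev d) d) ≅ cokernel (P.d 1 0)) := by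
    rcases d with _ | m
    · have h1 : (revP 0 P).d ((ComplexShape.up ℕ).prev 0) 0 = 0 :=
        (revP 0 P).shape _ _ (by simp)
      have h2 : P.d 1 0 = 0 := (hzero 1 (by omega)).eq_of_src _ _
      exact ⟨cokernelIsoOfEq h1 ≪≫ cokernelZeroIsoTarget ≪≫
        (cokernelZeroIsoTarget (X := P.X 1) (Y := P.X 0)).symm ≪≫
        (cokernelIsoOfEq h2).symm⟩
    · have h1 : (ComplexShape.up ℕ).prev (m+1) = m := CochainComplex.prev_nat_succ m
      have h2 : (revP (m+1) P).d m (m+1) = P.d (rf (m+1) m) (rf (m+1) (m+1)) :=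
        revP_d _ _ m
      have h3 : rf (m+1) m = 1 := by rw [rf_of_le (by omega)]; omega
      have h4 : rf (m+1) (m+1) = 0 := by rw [rf_of_le (by omega)]; omega
      rw [h1, h2]
      exact ⟨cokernel.mapIso _ (P.d 1 0) (eqToIso (congrArg P.X h3))
        (eqToIso (congrArg P.X h4))
        (by exact eqToHom_d_comm P h3 h4)⟩
  obtain ⟨cokIso⟩ := cokIso
  have topIso : Nonempty ((revP d P).homology d ≅ M) :=
    ⟨homologyTopIso (revP d P) d (hEzero (d+1) (by omega)) ≪≫ cokIso ≪≫
      (IsColimit.coconePointUniqueUpToIso hMcoker (colimit.isColimit _)).symm⟩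
  obtain ⟨topIso⟩ := topIso
  refine ⟨?_, ?_, ?_, ?_⟩
  · -- finiteness
    haveI := hQfin 0
    exact Module.Finite.of_surjective εN.hom
      ((ModuleCat.epi_iff_surjective εN).1 hεNepi)
  · exact ⟨rev d C, εN, hQproj, hQfin, hQzero, hεNepi, ⟨h0N, hexN0⟩, hexN⟩
  · intro i hi
    obtain ⟨e⟩ := extN i
    exact IsZero.of_iso (hEhom_zero i hi) e
  · obtain ⟨e⟩ := extN d
    exact ⟨(e ≪≫ topIso).symm⟩
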